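/- The function φ̃₁ satisfies, for all y ∈ ℝ, the separated eigenvalue equation with eigenvalue λ = 2 and angular parameter l = a: (1 + Q/(2P(y)))·φ̃₁''(y) + (P'(y)/(2P(y)))·φ̃₁'(y) + (2 − a²/P(y))·φ̃₁(y) = 0. -/

import Mathlib

open Real

/-- Rescaled solution `φ̃₁(y) = √((b²+c²−a²)/(2(c²−a²)))·sin y`. -/
noncomputable def phi1 (a b c y : ℝ) : ℝ :=
  Real.sqrt ((b ^ 2 + c ^ 2 - a ^ 2) / (2 * (c ^ 2 - a ^ 2))) * Real.sin y

/-- Rescaled solution `φ̃₂(y) = √((a²+c²−b²)/(2(c²−b²)))·cos y`. -/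
noncomputable def phi2 (a b c y : ℝ) : ℝ :=
  Real.sqrt ((a ^ 2 + c ^ 2 - b ^ 2) / (2 * (c ^ 2 - b ^ 2))) * Real.cos y

/-- Rescaled solution `φ̃₃(y) = √((a²+b²−c²)/(2(b²−c²)))·√(1 − ((b²−a²)/(c²−a²))·sin² y)`. -/
noncomputable def phi3 (a b c y : ℝ) : ℝ :=
  Real.sqrt ((a ^ 2 + b ^ 2 - c ^ 2) / (2 * (b ^ 2 - c ^ 2))) *
    Real.sqrt (1 - (b ^ 2 - a ^ 2) / (c ^ 2 - a ^ 2) * Real.sin y ^ 2)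

/-- `P(y) = (c² + (b²−a²)·cos 2y)/2`. -/
noncomputable def Pm (a b c y : ℝ) : ℝ := (c ^ 2 + (b ^ 2 - a ^ 2) * Real.cos (2 * y)) / 2

/-- `Q = c² − a² − b²`. -/
noncomputable def Qm (a b c : ℝ) : ℝ := c ^ 2 - a ^ 2 - b ^ 2

lemma deriv_phi1 (a b c : ℝ) :
    deriv (phi1 a b c) = fun y =>
      Real.sqrt ((b ^ 2 + c ^ 2 - a ^ 2) / (2 * (c ^ 2 - a ^ 2))) * Real.cos y := by
  funext y
  unfold phi1
  rw [deriv_const_mul _ Real.differentiable_sin.differentiableAt, Real.deriv_sin]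

lemma deriv2_phi1 (a b c : ℝ) (y : ℝ) :
    deriv (deriv (phi1 a b c)) y =
      -(Real.sqrt ((b ^ 2 + c ^ 2 - a ^ 2) / (2 * (c ^ 2 - a ^ 2))) * Real.sin y) := by
  rw [deriv_phi1]
  rw [deriv_const_mul _ Real.differentiable_cos.differentiableAt, Real.deriv_cos]
  ring

lemma deriv_Pm (a b c y : ℝ) :
    deriv (Pm a b c) y = -((b ^ 2 - a ^ 2) * Real.sin (2 * y)) := by
  have h : HasDerivAt (Pm a b c) (-((b ^ 2 - a ^ 2) * Real.sin (2 * y))) y := by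
    have h1 : HasDerivAt (fun y : ℝ => 2 * y) 2 y := by
      simpa using (hasDerivAt_id y).const_mul 2
    have h2 := (h1.cos).const_mul (b ^ 2 - a ^ 2)
    have h3 := ((h2.const_add (c ^ 2)).div_const 2)
    exact h3.congr_deriv (by ring)
  exact h.deriv

theorem phi1_separated_equation (a b c : ℝ) (ha : a ^ 2 < c ^ 2) (hb : b ^ 2 < c ^ 2)
    (habc : a ^ 2 + b ^ 2 ≤ c ^ 2) :
    ∀ y : ℝ,
      (1 + Qm a b c / (2 * Pm a b c y)) * deriv (deriv (phi1 a b c)) y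
        + deriv (Pm a b c) y / (2 * Pm a b c y) * deriv (phi1 a b c) y
        + (2 - a ^ 2 / Pm a b c y) * phi1 a b c y = 0 := by
  intro y
  have hc1 := Real.neg_one_le_cos (2 * y)
  have hc2 := Real.cos_le_one (2 * y)
  have hP : Pm a b c y > 0 := by
    unfold Pm
    rcases le_or_gt 0 (b ^ 2 - a ^ 2) with h | h
    · nlinarith
    · nlinarith
  rw [deriv2_phi1, deriv_Pm, deriv_phi1]
  unfold phi1 Pm Qm
  set K := Real.sqrt ((b ^ 2 + c ^ 2 - a ^ 2) / (2 * (c ^ 2 - a ^ 2)))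
  have hpy : Real.sin y ^ 2 + Real.cos y ^ 2 = 1 := Real.sin_sq_add_cos_sq y
  have hs2 : Real.sin (2 * y) = 2 * Real.sin y * Real.cos y := Real.sin_two_mul y
  have hc2' : Real.cos (2 * y) = 1 - 2 * Real.sin y ^ 2 := by
    rw [Real.cos_two_mul]; nlinarith [hpy]
  have hpne : c ^ 2 + (b ^ 2 - a ^ 2) * Real.cos (2 * y) ≠ 0 := by
    have := hP; unfold Pm at this; nlinarith
  have hcos : Real.cos y ^ 2 = 1 - Real.sin y ^ 2 := by nlinarith [hpy]
  field_simp
  rw [hs2, hc2']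
  ring_nf
  rw [hcos]
  ring
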